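/- Let Λ = diag(λ_1, …, λ_m) be a diagonal matrix with λ_1 ≥ λ_2 ≥ … ≥ λ_m > 0, let 𝒜_r ⊆ {1, …, m} be a subset of cardinality r, let E_{𝒜_r} ∈ ℝ^{m×r} be the matrix whose columns are the canonical basis vectors e_a for a ∈ 𝒜_r, and let Ē_{𝒜_r} ∈ ℝ^{m×(m−r)} be the matrix whose columns are the canonical basis vectors e_j for j ∉ 𝒜_r. Let Ū ∈ ℝ^{m×r} have orthonormal columns and suppose ‖Ē_{𝒜_r}ᵀŪ‖_F² ≤ δ for some δ ∈ [0, 1). Then the smallest eigenvalue of the symmetric matrix ŪᵀΛŪ ∈ ℝ^{r×r} satisfies σ_min(ŪᵀΛŪ) ≥ (min_{a ∈ 𝒜_r} λ_a)·(1 − δ). -/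

import Mathlib

open Matrix Finset

/-- Lemma B.1 of the paper (with the `O(δ)` made explicit): if `Ū` has orthonormal columns
and the Frobenius norm squared of `Ē_{𝒜_r}ᵀŪ` (i.e. the total squared mass of the rows of `Ū`
outside the index set `𝒜`) is at most `δ < 1`, then every eigenvalue of the symmetric matrix
`ŪᵀΛŪ` is at least `(min_{a ∈ 𝒜} λ_a)·(1 − δ)`. -/
theorem smallest_eigenvalue_bound (m r : ℕ) (hr0 : 0 < r) (hrm : r ≤ m)
    (lam : Fin m → ℝ) (hmono : ∀ i j : Fin m, i ≤ j → lam j ≤ lam i)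
    (hpos : ∀ i, 0 < lam i)
    (𝒜 : Finset (Fin m)) (hcard : 𝒜.card = r)
    (U : Matrix (Fin m) (Fin r) ℝ) (hU : Uᵀ * U = 1)
    (δ : ℝ) (hδ0 : 0 ≤ δ) (hδ1 : δ < 1)
    (htail : ∑ i ∈ 𝒜ᶜ, ∑ j, (U i j) ^ 2 ≤ δ)
    (hM : (Uᵀ * Matrix.diagonal lam * U).IsHermitian) :
    ∀ k : Fin r,
      (𝒜.inf' (Finset.card_pos.mp (by omega)) lam) * (1 - δ) ≤ hM.eigenvalues k := by
  intro k
  have hA : 𝒜.Nonempty := Finset.card_pos.mp (by omega)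
  set lam0 : ℝ := 𝒜.inf' hA lam with hlam0
  have hlam0pos : 0 < lam0 := (Finset.lt_inf'_iff hA).mpr fun i _ => hpos i
  -- the eigenvector
  set x : Fin r → ℝ := (WithLp.equiv 2 (Fin r → ℝ)) (hM.eigenvectorBasis k) with hxdef
  have heig : (Uᵀ * Matrix.diagonal lam * U) *ᵥ x = hM.eigenvalues k • x :=
    hM.mulVec_eigenvectorBasis k
  -- x has unit norm
  have hx2 : ∑ j, x j ^ 2 = 1 := by
    have h1 : (inner ℝ (hM.eigenvectorBasis k) (hM.eigenvectorBasis k) : ℝ) = 1 := by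
      have := hM.eigenvectorBasis.orthonormal.1 k
      rw [real_inner_self_eq_norm_mul_norm, this, one_mul]
    rw [PiLp.inner_apply] at h1
    simpa [hxdef, pow_two] using h1
  set y : Fin m → ℝ := U *ᵥ x with hydef
  -- sum of squares of y is 1
  have hy2 : ∑ i, y i ^ 2 = 1 := by
    have : y ⬝ᵥ y = x ⬝ᵥ x := by
      calc y ⬝ᵥ y = x ᵥ* Uᵀ ⬝ᵥ (U *ᵥ x) := by rw [vecMul_transpose]
        _ = x ᵥ* Uᵀ ᵥ* U ⬝ᵥ x := by rw [dotProduct_mulVec]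
        _ = x ᵥ* (Uᵀ * U) ⬝ᵥ x := by rw [vecMul_vecMul]
        _ = x ⬝ᵥ x := by rw [hU, vecMul_one]
    simpa [dotProduct, pow_two] using this.trans (by simpa [dotProduct, pow_two] using hx2)
  -- eigenvalue as quadratic form
  have hquad : hM.eigenvalues k = ∑ i, lam i * y i ^ 2 := by
    have h1 : x ⬝ᵥ ((Uᵀ * Matrix.diagonal lam * U) *ᵥ x) = hM.eigenvalues k := by
      rw [heig, dotProduct_smul, smul_eq_mul]
      simp only [dotProduct, pow_two] at hx2 ⊢
      rw [show ∑ i, x i * x i = 1 from by simpa [pow_two] using hx2, mul_one]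
    rw [← h1]
    calc x ⬝ᵥ ((Uᵀ * Matrix.diagonal lam * U) *ᵥ x)
        = x ᵥ* Uᵀ ⬝ᵥ ((Matrix.diagonal lam * U) *ᵥ x) := by
          rw [Matrix.mul_assoc, ← mulVec_mulVec, dotProduct_mulVec]
      _ = y ⬝ᵥ (Matrix.diagonal lam *ᵥ y) := by rw [vecMul_transpose, ← mulVec_mulVec]
      _ = ∑ i, lam i * y i ^ 2 := by
          simp only [dotProduct, mulVec_diagonal]
          exact Finset.sum_congr rfl fun i _ => by ring
  -- tail bound via Cauchy–Schwarz
  have htail' : ∑ i ∈ 𝒜ᶜ, y i ^ 2 ≤ δ := by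
    refine le_trans (Finset.sum_le_sum fun i _ => ?_) htail
    have hcs := Finset.sum_mul_sq_le_sq_mul_sq Finset.univ (fun j => U i j) x
    have : y i ^ 2 ≤ (∑ j, U i j ^ 2) * ∑ j, x j ^ 2 := by
      simpa [hydef, Matrix.mulVec, dotProduct] using hcs
    rw [hx2, mul_one] at this
    exact this
  have hyA : 1 - δ ≤ ∑ i ∈ 𝒜, y i ^ 2 := by
    have := Finset.sum_add_sum_compl 𝒜 (fun i => y i ^ 2)
    rw [hy2] at this
    linarith
  -- put it together
  have hsplit := Finset.sum_add_sum_compl 𝒜 (fun i => lam i * y i ^ 2)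
  have h1 : lam0 * ∑ i ∈ 𝒜, y i ^ 2 ≤ ∑ i ∈ 𝒜, lam i * y i ^ 2 := by
    rw [Finset.mul_sum]
    exact Finset.sum_le_sum fun i hi =>
      mul_le_mul_of_nonneg_right (Finset.inf'_le lam hi) (sq_nonneg _)
  have h2 : 0 ≤ ∑ i ∈ 𝒜ᶜ, lam i * y i ^ 2 :=
    Finset.sum_nonneg fun i _ => mul_nonneg (hpos i).le (sq_nonneg _)
  have h3 : lam0 * (1 - δ) ≤ lam0 * ∑ i ∈ 𝒜, y i ^ 2 :=
    mul_le_mul_of_nonneg_left hyA hlam0pos.le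
  rw [hquad, ← hsplit]
  linarith
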